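/- Let Γ ⊂ ℝ^2 be a simple C^1-regular arc, C^2-regular in its interior, tangent at an endpoint p to a line C, with Γ lying on one side of C near p. If the unit normal N(p) points to the side of C containing Γ near p, then either Γ coincides with C near p, or the signed geodesic curvature of Γ (with respect to the normal field extending N) is strictly positive at some point in every neighborhood of p. -/

import Mathlib

open Set

private lemma hda_fst {f : ℝ → ℝ × ℝ} {f' : ℝ × ℝ} {x : ℝ} (h : HasDerivAt f f' x) :
    HasDerivAt (fun t => (f t).1) f'.1 x := by
  simpa using (h.hasFDerivAt.fst).hasDerivAt

private lemma hda_snd {f : ℝ → ℝ × ℝ} {f' : ℝ × ℝ} {x : ℝ} (h : HasDerivAt f f' x) :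
    HasDerivAt (fun t => (f t).2) f'.2 x := by
  simpa using (h.hasFDerivAt.snd).hasDerivAt

/-- (Planar maximum principle, Lemma 2.1 with `K = 0`.) Let
`γ : [0,L] → ℝ²` be a unit-speed simple `C¹` arc, `C²` in its interior, starting at `p` and
tangent there to the line `C` through `p` with unit direction `d`; let `n = (-d₂, d₁)` be the
unit normal of `C` (so `N(p) = n` for the normal field `N = rot γ'`).  If near `p` the arc
lies on the side of `C` into which `n` points, then either `γ` coincides with `C` near `p`,
or the signed curvature `k = det(γ', γ'')` is strictly positive at points arbitrarily
close to `p`. -/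
theorem stmt_17 (L : ℝ) (hL : 0 < L) (γ γ' γ'' : ℝ → ℝ × ℝ) (p d : ℝ × ℝ)
    (hstart : γ 0 = p)
    (hdunit : d.1 ^ 2 + d.2 ^ 2 = 1)
    (hd1 : ∀ t ∈ Set.Icc 0 L, HasDerivWithinAt γ (γ' t) (Set.Icc 0 L) t)
    (hγ'c : ContinuousOn γ' (Set.Icc 0 L))
    (hunit : ∀ t ∈ Set.Icc 0 L, (γ' t).1 ^ 2 + (γ' t).2 ^ 2 = 1)
    (hsimple : Set.InjOn γ (Set.Icc 0 L))
    (hd2 : ∀ t ∈ Set.Ioo 0 L, HasDerivAt γ' (γ'' t) t)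
    (hγ''c : ContinuousOn γ'' (Set.Ioo 0 L))
    (htan : γ' 0 = d)
    (hside : ∃ δ > (0 : ℝ), ∀ t ∈ Set.Icc 0 δ ∩ Set.Icc 0 L,
      0 ≤ (γ t - p).1 * (-d.2) + (γ t - p).2 * d.1) :
    (∃ δ > (0 : ℝ), ∀ t ∈ Set.Icc 0 δ ∩ Set.Icc 0 L, ∃ s : ℝ, γ t = p + s • d) ∨
    (∀ ε > (0 : ℝ), ∃ t ∈ Set.Ioo 0 L, t < ε ∧
      0 < (γ' t).1 * (γ'' t).2 - (γ' t).2 * (γ'' t).1) := by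
  rw [or_iff_not_imp_right]
  intro hnot
  push_neg at hnot
  obtain ⟨ε, hε, hk⟩ := hnot
  obtain ⟨δs, hδs, hs⟩ := hside
  -- tangential component u of γ'
  set u : ℝ → ℝ := fun t => (γ' t).1 * d.1 + (γ' t).2 * d.2 with hu_def
  have hu0 : u 0 = 1 := by
    simp only [hu_def, htan]
    nlinarith [hdunit]
  have hucont : ContinuousOn u (Icc 0 L) :=
    ((hγ'c.fst).mul continuousOn_const).add ((hγ'c.snd).mul continuousOn_const)
  have h0mem : (0 : ℝ) ∈ Icc 0 L := ⟨le_refl 0, hL.le⟩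
  have hpre : u ⁻¹' Ioi 0 ∈ nhdsWithin 0 (Icc 0 L) := by
    have := hucont 0 h0mem
    exact this (Ioi_mem_nhds (by rw [hu0]; norm_num))
  rw [Metric.mem_nhdsWithin_iff] at hpre
  obtain ⟨δ1, hδ1, hball⟩ := hpre
  -- choose the working interval
  set M : ℝ := min (min δs (min (δ1/2) ε)) L with hM_def
  have hM : 0 < M := by positivity
  have hML : M ≤ L := min_le_right _ _
  have hMδs : M ≤ δs := le_trans (min_le_left _ _) (min_le_left _ _)
  have hMδ1 : M ≤ δ1 / 2 := le_trans (min_le_left _ _) (le_trans (min_le_right _ _) (min_le_left _ _))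
  have hMε : M ≤ ε := le_trans (min_le_left _ _) (le_trans (min_le_right _ _) (min_le_right _ _))
  -- normal component v of γ'
  set v : ℝ → ℝ := fun t => (γ' t).1 * (-d.2) + (γ' t).2 * d.1 with hv_def
  have hv0 : v 0 = 0 := by simp only [hv_def, htan]; ring
  have hvcont : ContinuousOn v (Icc 0 L) :=
    ((hγ'c.fst).mul continuousOn_const).add ((hγ'c.snd).mul continuousOn_const)
  have hvd : ∀ x ∈ Ioo 0 L, HasDerivAt v ((γ'' x).1 * (-d.2) + (γ'' x).2 * d.1) x := by
    intro x hx
    exact ((hda_fst (hd2 x hx)).mul_const _).add ((hda_snd (hd2 x hx)).mul_const _)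
  -- orthogonality of γ' and γ''
  have horth : ∀ x ∈ Ioo 0 L, (γ' x).1 * (γ'' x).1 + (γ' x).2 * (γ'' x).2 = 0 := by
    intro x hx
    have h1 : HasDerivAt (fun t => (γ' t).1 ^ 2 + (γ' t).2 ^ 2)
        (2 * (γ' x).1 * (γ'' x).1 + 2 * (γ' x).2 * (γ'' x).2) x := by
      have := ((hda_fst (hd2 x hx)).fun_pow 2).add ((hda_snd (hd2 x hx)).fun_pow 2)
      refine this.congr_deriv ?_
      ring
    have h2 : HasDerivAt (fun _ : ℝ => (1 : ℝ)) 0 x := hasDerivAt_const x 1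
    have h3 : (fun t => (γ' t).1 ^ 2 + (γ' t).2 ^ 2) =ᶠ[nhds x] (fun _ : ℝ => (1 : ℝ)) := by
      filter_upwards [Ioo_mem_nhds hx.1 hx.2] with t ht
      exact hunit t ⟨ht.1.le, ht.2.le⟩
    have h4 : HasDerivAt (fun t => (γ' t).1 ^ 2 + (γ' t).2 ^ 2) 0 x := h2.congr_of_eventuallyEq h3
    have := h1.unique h4
    linarith
  -- v' = k * u
  have hvderiv : ∀ x ∈ Ioo 0 L,
      (γ'' x).1 * (-d.2) + (γ'' x).2 * d.1
        = ((γ' x).1 * (γ'' x).2 - (γ' x).2 * (γ'' x).1) * u x := by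
    intro x hx
    have h1 := horth x hx
    have h2 := hunit x ⟨hx.1.le, hx.2.le⟩
    simp only [hu_def]
    linear_combination ((γ'' x).1 * d.2 - (γ'' x).2 * d.1) * h2
      + ((γ' x).2 * d.1 - (γ' x).1 * d.2) * h1
  -- u > 0 on [0, M]
  have hupos : ∀ x ∈ Icc 0 M, 0 < u x := by
    intro x hx
    have hxL : x ∈ Icc 0 L := ⟨hx.1, le_trans hx.2 hML⟩
    have hxb : x ∈ Metric.ball (0 : ℝ) δ1 := by
      simp only [Metric.mem_ball, Real.dist_eq, sub_zero, abs_of_nonneg hx.1]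
      linarith [hx.2]
    exact hball ⟨hxb, hxL⟩
  -- v is antitone on [0, M]
  have hvmono : AntitoneOn v (Icc 0 M) := by
    apply antitoneOn_of_deriv_nonpos (convex_Icc 0 M)
      (hvcont.mono (Icc_subset_Icc le_rfl hML))
    · intro x hx
      rw [interior_Icc] at hx
      have hxL : x ∈ Ioo 0 L := ⟨hx.1, lt_of_lt_of_le hx.2 hML⟩
      exact (hvd x hxL).differentiableAt.differentiableWithinAt
    · intro x hx
      rw [interior_Icc] at hx
      have hxL : x ∈ Ioo 0 L := ⟨hx.1, lt_of_lt_of_le hx.2 hML⟩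
      rw [(hvd x hxL).deriv, hvderiv x hxL]
      have hk' := hk x hxL (lt_of_lt_of_le hx.2 hMε)
      have hu' := hupos x ⟨hx.1.le, hx.2.le⟩
      exact mul_nonpos_of_nonpos_of_nonneg hk' hu'.le
  have hvle : ∀ t ∈ Icc 0 M, v t ≤ 0 := by
    intro t ht
    have := hvmono ⟨le_rfl, hM.le⟩ ht ht.1
    rwa [hv0] at this
  -- the height function h
  set h : ℝ → ℝ := fun t => ((γ t).1 - p.1) * (-d.2) + ((γ t).2 - p.2) * d.1 with hh_def
  have hγcont : ContinuousOn γ (Icc 0 L) := fun t ht => (hd1 t ht).continuousWithinAt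
  have hhcont : ContinuousOn h (Icc 0 L) :=
    (((hγcont.fst).sub continuousOn_const).mul continuousOn_const).add
      (((hγcont.snd).sub continuousOn_const).mul continuousOn_const)
  have hhd : ∀ x ∈ Ioo 0 L, HasDerivAt h (v x) x := by
    intro x hx
    have H : HasDerivAt γ (γ' x) x :=
      (hd1 x ⟨hx.1.le, hx.2.le⟩).hasDerivAt (Icc_mem_nhds hx.1 hx.2)
    exact (((hda_fst H).sub_const _).mul_const _).add (((hda_snd H).sub_const _).mul_const _)
  have hhmono : AntitoneOn h (Icc 0 M) := by
    apply antitoneOn_of_deriv_nonpos (convex_Icc 0 M)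
      (hhcont.mono (Icc_subset_Icc le_rfl hML))
    · intro x hx
      rw [interior_Icc] at hx
      have hxL : x ∈ Ioo 0 L := ⟨hx.1, lt_of_lt_of_le hx.2 hML⟩
      exact (hhd x hxL).differentiableAt.differentiableWithinAt
    · intro x hx
      rw [interior_Icc] at hx
      have hxL : x ∈ Ioo 0 L := ⟨hx.1, lt_of_lt_of_le hx.2 hML⟩
      rw [(hhd x hxL).deriv]
      exact hvle x ⟨hx.1.le, hx.2.le⟩
  have hh0 : h 0 = 0 := by simp only [hh_def, hstart]; ring
  -- conclusion
  refine ⟨M, hM, ?_⟩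
  rintro t ⟨ht1, ht2⟩
  have hhle : h t ≤ 0 := by
    have := hhmono ⟨le_rfl, hM.le⟩ ⟨ht1.1, ht1.2⟩ ht1.1
    rwa [hh0] at this
  have hhge : 0 ≤ h t := by
    have := hs t ⟨⟨ht1.1, le_trans ht1.2 hMδs⟩, ht2⟩
    simpa [hh_def, Prod.fst_sub, Prod.snd_sub] using this
  have hht : ((γ t).1 - p.1) * (-d.2) + ((γ t).2 - p.2) * d.1 = 0 := le_antisymm hhle hhge
  refine ⟨((γ t).1 - p.1) * d.1 + ((γ t).2 - p.2) * d.2, ?_⟩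
  have e1 : (γ t).1 = p.1 + (((γ t).1 - p.1) * d.1 + ((γ t).2 - p.2) * d.2) * d.1 := by
    linear_combination (-((γ t).1 - p.1)) * hdunit + (-d.2) * hht
  have e2 : (γ t).2 = p.2 + (((γ t).1 - p.1) * d.1 + ((γ t).2 - p.2) * d.2) * d.2 := by
    linear_combination (-((γ t).2 - p.2)) * hdunit + d.1 * hht
  ext
  · simpa using e1
  · simpa using e2
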